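/- Let 𝒞 ⊆ 𝔽_p^n × 𝔽_p^n be a linear code and ψ_{ab}(τ,τ̄) = Σ_{k_1,k_2 ∈ ℤ} q^{(p/4)((a+b)/p + k_1 + k_2)²} q̄^{(p/4)((a−b)/p + k_1 − k_2)²}. Then the complete enumerator polynomial W_𝒞 evaluated at x_{ab} = ψ_{ab} equals the lattice theta function of the Construction A lattice: W_𝒞({ψ_{ab}}) = Θ_{Λ̃(𝒞)}(τ,τ̄) = Σ_{(p_L,p_R) ∈ Λ̃(𝒞)} q^{p_L²/2} q̄^{p_R²/2}. -/

import Mathlib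

open Complex

noncomputable section

/-- The building block `ψ_{ab}(τ,τ̄) = Σ_{k₁,k₂∈ℤ} q^{(p/4)((a+b)/p+k₁+k₂)²}
q̄^{(p/4)((a−b)/p+k₁−k₂)²}` with `q = e^{2πiτ}`, `q̄ = e^{−2πiτ̄}` and `τ̄` the complex
conjugate of `τ`. -/
def psi (p : ℕ) (τ : ℂ) (a b : ZMod p) : ℂ :=
  ∑' k : ℤ × ℤ,
    Complex.exp (2 * (Real.pi : ℂ) * Complex.I * τ * ((p : ℂ) / 4) *
        (((a.val : ℂ) + (b.val : ℂ)) / p + (k.1 : ℂ) + (k.2 : ℂ)) ^ 2) *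
    Complex.exp (-(2 * (Real.pi : ℂ) * Complex.I) * (starRingEnd ℂ τ) * ((p : ℂ) / 4) *
        (((a.val : ℂ) - (b.val : ℂ)) / p + (k.1 : ℂ) - (k.2 : ℂ)) ^ 2)

/-- `wt_{ab}(c) = |{i : c_i = (a,b)}|`. -/
def wtab (p n : ℕ) (c : Fin n → ZMod p × ZMod p) (ab : ZMod p × ZMod p) : ℕ :=
  (Finset.univ.filter fun i => c i = ab).card

/-- The Construction A lattice of `𝒞` in the momentum coordinates
`(p_L, p_R) = ((λ₁+λ₂)/√2, (λ₁−λ₂)/√2)` with `λ₁ = (α+pk₁)/√p`, `λ₂ = (β+pk₂)/√p`. -/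
def tildeLattice (p n : ℕ) (𝒞 : Set (Fin n → ZMod p × ZMod p)) :
    Set ((Fin n → ℝ) × (Fin n → ℝ)) :=
  {x | ∃ v w : Fin n → ℤ,
        (fun i => (((v i : ZMod p)), ((w i : ZMod p)))) ∈ 𝒞 ∧
        x.1 = (fun i => ((v i : ℝ) + (w i : ℝ)) / Real.sqrt (2 * p)) ∧
        x.2 = (fun i => ((v i : ℝ) - (w i : ℝ)) / Real.sqrt (2 * p))}

/-! ### Auxiliary lemmas -/

open Real in
lemma gauss1 {c : ℝ} (hc : 0 < c) (α : ℝ) :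
    Summable fun n : ℤ => Real.exp (-c * (α + n) ^ 2) := by
  have hπ : (0:ℝ) < π := Real.pi_pos
  have h := (summable_pow_mul_jacobiTheta₂_term_bound (c * |α| / π)
    (T := c / π) (by positivity) 0).mul_left (Real.exp (-c * α ^ 2))
  refine Summable.of_nonneg_of_le (fun n => (Real.exp_pos _).le) (fun n => ?_) h
  rw [pow_zero, one_mul, ← Real.exp_add, Real.exp_le_exp]
  have key : -π * (c / π * (n:ℝ) ^ 2 - 2 * (c * |α| / π) * |(n:ℝ)|)
      = -c * (n:ℝ) ^ 2 + 2 * c * |α| * |(n:ℝ)| := by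
    field_simp
    ring
  rw [Int.cast_abs, key]
  nlinarith [neg_le_abs (α * (n:ℝ)), abs_mul α (n:ℝ), abs_nonneg (α*(n:ℝ)), sq_nonneg (α + (n:ℝ))]

lemma gauss2 {c : ℝ} (hc : 0 < c) (α β : ℝ) :
    Summable fun k : ℤ × ℤ =>
      Real.exp (-c * (α + k.1 + k.2) ^ 2) * Real.exp (-c * (β + k.1 - k.2) ^ 2) := by
  have h := (gauss1 hc α).mul_of_nonneg (gauss1 hc β)
    (fun n => (Real.exp_pos _).le) (fun n => (Real.exp_pos _).le)
  have hinj : Function.Injective (fun k : ℤ × ℤ => ((k.1 + k.2, k.1 - k.2) : ℤ × ℤ)) := by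
    intro a b hab
    simp only [Prod.ext_iff] at hab ⊢
    omega
  have h2 := h.comp_injective hinj
  refine h2.congr fun k => ?_
  simp only [Function.comp_apply]
  push_cast
  ring_nf

/-- The individual term of the double series defining `psi`. -/
def fterm (p : ℕ) (τ : ℂ) (ab : ZMod p × ZMod p) (k : ℤ × ℤ) : ℂ :=
  Complex.exp (2 * (Real.pi : ℂ) * Complex.I * τ * ((p : ℂ) / 4) *
      (((ab.1.val : ℂ) + (ab.2.val : ℂ)) / p + (k.1 : ℂ) + (k.2 : ℂ)) ^ 2) *
  Complex.exp (-(2 * (Real.pi : ℂ) * Complex.I) * (starRingEnd ℂ τ) * ((p : ℂ) / 4) *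
      (((ab.1.val : ℂ) - (ab.2.val : ℂ)) / p + (k.1 : ℂ) - (k.2 : ℂ)) ^ 2)

open Real in
lemma norm_fterm (p : ℕ) (τ : ℂ) (ab : ZMod p × ZMod p) (k : ℤ × ℤ) :
    ‖fterm p τ ab k‖ =
      Real.exp (-(π * p * τ.im / 2) * (((ab.1.val : ℝ) + (ab.2.val : ℝ)) / p + k.1 + k.2) ^ 2) *
      Real.exp (-(π * p * τ.im / 2) * (((ab.1.val : ℝ) - (ab.2.val : ℝ)) / p + k.1 - k.2) ^ 2) := by
  have h1 : 2 * (Real.pi : ℂ) * Complex.I * τ * ((p : ℂ) / 4) *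
      (((ab.1.val : ℂ) + (ab.2.val : ℂ)) / p + (k.1 : ℂ) + (k.2 : ℂ)) ^ 2 =
      ((2 * π * (p / 4) * ((((ab.1.val : ℝ) + (ab.2.val : ℝ)) / p + k.1 + k.2) ^ 2) : ℝ) : ℂ)
        * (Complex.I * τ) := by
    push_cast
    ring
  have h2 : -(2 * (Real.pi : ℂ) * Complex.I) * (starRingEnd ℂ τ) * ((p : ℂ) / 4) *
      (((ab.1.val : ℂ) - (ab.2.val : ℂ)) / p + (k.1 : ℂ) - (k.2 : ℂ)) ^ 2 =
      ((2 * π * (p / 4) * ((((ab.1.val : ℝ) - (ab.2.val : ℝ)) / p + k.1 - k.2) ^ 2) : ℝ) : ℂ)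
        * (-(Complex.I * (starRingEnd ℂ τ))) := by
    push_cast
    ring
  rw [fterm, norm_mul, Complex.norm_exp,
    Complex.norm_exp, h1, h2]
  congr 1 <;> rw [Real.exp_eq_exp]
  · rw [Complex.re_ofReal_mul, Complex.I_mul_re]
    ring
  · rw [Complex.re_ofReal_mul, Complex.neg_re, Complex.I_mul_re,
      Complex.conj_im]
    ring

open Real in
lemma summable_norm_fterm {p : ℕ} (hp : 0 < p) {τ : ℂ} (hτ : 0 < τ.im) (ab : ZMod p × ZMod p) :
    Summable fun k : ℤ × ℤ => ‖fterm p τ ab k‖ := by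
  have hc : (0:ℝ) < π * p * τ.im / 2 := by
    have := Real.pi_pos
    positivity
  have := gauss2 hc (((ab.1.val : ℝ) + (ab.2.val : ℝ)) / p) (((ab.1.val : ℝ) - (ab.2.val : ℝ)) / p)
  exact this.congr fun k => (norm_fterm p τ ab k).symm

lemma prod_tsum_aux {γ : Type*} :
    ∀ (n : ℕ) (f : Fin n → γ → ℂ), (∀ i, Summable fun x => ‖f i x‖) →
      (Summable fun K : Fin n → γ => ‖∏ i, f i (K i)‖) ∧
      ((∏ i, ∑' x, f i x) = ∑' K : Fin n → γ, ∏ i, f i (K i)) := by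
  intro n
  induction n with
  | zero =>
    intro f hf
    constructor
    · exact (hasSum_fintype _).summable
    · rw [tsum_eq_single (default : Fin 0 → γ)
        (fun b hb => absurd (Subsingleton.elim b default) hb)]
      simp
  | succ n ih =>
    intro f hf
    obtain ⟨ihS, ihT⟩ := ih (fun i => f i.succ) (fun i => hf i.succ)
    have hmulnorm : Summable (fun x : γ × (Fin n → γ) => ‖f 0 x.1 * ∏ i, f i.succ (x.2 i)‖) := by
      have := Summable.mul_norm (hf 0) ihS
      exact this
    have key : ∀ x : γ × (Fin n → γ),
        (∏ i, f i ((Fin.cons x.1 x.2 : Fin (n+1) → γ) i)) = f 0 x.1 * ∏ i, f i.succ (x.2 i) := by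
      intro x
      rw [Fin.prod_univ_succ]
      simp
    constructor
    · rw [← (Fin.consEquiv (fun _ => γ)).summable_iff]
      refine hmulnorm.congr fun x => ?_
      simp only [Function.comp_apply, Fin.consEquiv_apply]
      rw [key x]
    · have hmm := tsum_mul_tsum_of_summable_norm (hf 0) ihS
      rw [Fin.prod_univ_succ, ihT, hmm, ← (Fin.consEquiv (fun _ => γ)).tsum_eq]
      refine tsum_congr fun x => ?_
      simp only [Fin.consEquiv_apply]
      rw [key x]

lemma zmod_round (p : ℕ) [NeZero p] (a : ZMod p) (k : ℤ) :
    ((((a.val : ℤ) + p * k : ℤ)) : ZMod p) = a := by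
  push_cast
  simp [ZMod.natCast_val, ZMod.natCast_self, ZMod.cast_id]

lemma zmod_dvd (p : ℕ) [NeZero p] (m : ℤ) :
    (p : ℤ) ∣ m - (((m : ZMod p)).val : ℤ) := by
  rw [← ZMod.intCast_zmod_eq_zero_iff_dvd]
  push_cast
  simp [ZMod.natCast_val, ZMod.cast_id]

lemma zmod_recon (p : ℕ) [NeZero p] (m : ℤ) :
    ((((m : ZMod p)).val : ℤ) + p * ((m - (((m : ZMod p)).val : ℤ)) / p) = m) := by
  rw [Int.mul_ediv_cancel' (zmod_dvd p m)]
  ring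

/-- The parametrization of the Construction A lattice by pairs (codeword, integer shifts). -/
def fwd (p n : ℕ) [NeZero p] (𝒞 : Submodule (ZMod p) (Fin n → ZMod p × ZMod p))
    (cK : 𝒞 × (Fin n → ℤ × ℤ)) : tildeLattice p n 𝒞 :=
  ⟨((fun i => (((((cK.1.val i).1.val : ℤ) + p * (cK.2 i).1 : ℤ) : ℝ) +
        ((((cK.1.val i).2.val : ℤ) + p * (cK.2 i).2 : ℤ) : ℝ)) / Real.sqrt (2 * p)),
    (fun i => (((((cK.1.val i).1.val : ℤ) + p * (cK.2 i).1 : ℤ) : ℝ) -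
        ((((cK.1.val i).2.val : ℤ) + p * (cK.2 i).2 : ℤ) : ℝ)) / Real.sqrt (2 * p))),
   by
    refine ⟨fun i => ((cK.1.val i).1.val : ℤ) + p * (cK.2 i).1,
            fun i => ((cK.1.val i).2.val : ℤ) + p * (cK.2 i).2, ?_, rfl, rfl⟩
    have : (fun i => (((((cK.1.val i).1.val : ℤ) + p * (cK.2 i).1 : ℤ) : ZMod p),
        ((((cK.1.val i).2.val : ℤ) + p * (cK.2 i).2 : ℤ) : ZMod p))) = cK.1.val := by
      funext i
      rw [zmod_round, zmod_round]
    rw [this]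
    exact cK.1.2⟩

lemma fwd_bijective (p n : ℕ) [NeZero p] (hp : 0 < p)
    (𝒞 : Submodule (ZMod p) (Fin n → ZMod p × ZMod p)) :
    Function.Bijective (fwd p n 𝒞) := by
  have hs : Real.sqrt (2 * p) ≠ 0 := by
    refine ne_of_gt (Real.sqrt_pos.mpr ?_)
    positivity
  have hpz : (p : ℤ) ≠ 0 := by exact_mod_cast hp.ne'
  constructor
  · rintro ⟨c, K⟩ ⟨c', K'⟩ h
    rw [Subtype.ext_iff, Prod.ext_iff] at h
    obtain ⟨h1, h2⟩ := h
    have hvw : ∀ i, ((((c.val i).1.val : ℤ) + p * (K i).1 : ℤ) : ℝ) =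
        ((((c'.val i).1.val : ℤ) + p * (K' i).1 : ℤ) : ℝ) ∧
        ((((c.val i).2.val : ℤ) + p * (K i).2 : ℤ) : ℝ) =
        ((((c'.val i).2.val : ℤ) + p * (K' i).2 : ℤ) : ℝ) := by
      intro i
      have e1 := congrFun h1 i
      have e2 := congrFun h2 i
      simp only [fwd] at e1 e2
      rw [div_eq_div_iff hs hs] at e1 e2
      have e1' := mul_right_cancel₀ hs e1
      have e2' := mul_right_cancel₀ hs e2
      constructor <;> linarith
    have hv : ∀ i, (((c.val i).1.val : ℤ) + p * (K i).1 : ℤ) =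
        (((c'.val i).1.val : ℤ) + p * (K' i).1 : ℤ) := fun i => by
      exact_mod_cast (hvw i).1
    have hw : ∀ i, (((c.val i).2.val : ℤ) + p * (K i).2 : ℤ) =
        (((c'.val i).2.val : ℤ) + p * (K' i).2 : ℤ) := fun i => by
      exact_mod_cast (hvw i).2
    have hc : ∀ i, c.val i = c'.val i := by
      intro i
      have a1 : (c.val i).1 = (c'.val i).1 := by
        rw [← zmod_round p (c.val i).1 (K i).1, ← zmod_round p (c'.val i).1 (K' i).1, hv i]
      have a2 : (c.val i).2 = (c'.val i).2 := by
        rw [← zmod_round p (c.val i).2 (K i).2, ← zmod_round p (c'.val i).2 (K' i).2, hw i]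
      exact Prod.ext a1 a2
    have hcc : c = c' := Subtype.ext (funext hc)
    refine Prod.ext hcc (funext fun i => ?_)
    have b1 := hv i
    have b2 := hw i
    rw [hc i] at b1 b2
    have hk1 : (K i).1 = (K' i).1 := mul_left_cancel₀ hpz (add_left_cancel b1)
    have hk2 : (K i).2 = (K' i).2 := mul_left_cancel₀ hpz (add_left_cancel b2)
    exact Prod.ext hk1 hk2
  · rintro ⟨x, v, w, hmem, hx1, hx2⟩
    refine ⟨(⟨fun i => ((v i : ZMod p), (w i : ZMod p)), hmem⟩,
      fun i => ((v i - (((v i : ZMod p)).val : ℤ)) / p, (w i - (((w i : ZMod p)).val : ℤ)) / p)),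
      ?_⟩
    apply Subtype.ext
    simp only [fwd]
    have hv : ∀ i, ((((v i : ZMod p)).val : ℤ) +
        p * ((v i - (((v i : ZMod p)).val : ℤ)) / p)) = v i := fun i => zmod_recon p (v i)
    have hw : ∀ i, ((((w i : ZMod p)).val : ℤ) +
        p * ((w i - (((w i : ZMod p)).val : ℤ)) / p)) = w i := fun i => zmod_recon p (w i)
    refine Prod.ext ?_ ?_
    · rw [hx1]
      funext i
      simp only [hv i, hw i]
    · rw [hx2]
      funext i
      simp only [hv i, hw i]

/-- The complete enumerator polynomial of a linear code `𝒞 ⊆ 𝔽_p^n × 𝔽_p^n` evaluated at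
`x_{ab} = ψ_{ab}` equals the lattice theta function of the Construction A lattice
`Λ̃(𝒞)`. -/
theorem stmt11 (p n : ℕ) [NeZero p] (hp : p.Prime)
    (𝒞 : Submodule (ZMod p) (Fin n → ZMod p × ZMod p)) [Fintype 𝒞]
    (τ : ℂ) (hτ : 0 < τ.im) :
    ∑ c : 𝒞, ∏ ab : ZMod p × ZMod p,
        psi p τ ab.1 ab.2 ^ wtab p n (c : Fin n → ZMod p × ZMod p) ab =
      ∑' x : tildeLattice p n 𝒞,
        Complex.exp (2 * (Real.pi : ℂ) * Complex.I * τ *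
            ((∑ i, ((x.val.1 i : ℂ)) ^ 2) / 2)) *
        Complex.exp (-(2 * (Real.pi : ℂ) * Complex.I) * (starRingEnd ℂ τ) *
            ((∑ i, ((x.val.2 i : ℂ)) ^ 2) / 2)) := by
  classical
  have hp0 : 0 < p := hp.pos
  have hpC : (p : ℂ) ≠ 0 := by exact_mod_cast hp0.ne'
  set G : tildeLattice p n 𝒞 → ℂ := fun x =>
    Complex.exp (2 * (Real.pi : ℂ) * Complex.I * τ * ((∑ i, ((x.val.1 i : ℂ)) ^ 2) / 2)) *
    Complex.exp (-(2 * (Real.pi : ℂ) * Complex.I) * (starRingEnd ℂ τ) *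
        ((∑ i, ((x.val.2 i : ℂ)) ^ 2) / 2)) with hG
  set F : 𝒞 × (Fin n → ℤ × ℤ) → ℂ :=
    fun cK => ∏ i, fterm p τ (cK.1.val i) (cK.2 i) with hF
  have sumf : ∀ ab : ZMod p × ZMod p, Summable fun k => ‖fterm p τ ab k‖ :=
    summable_norm_fterm hp0 hτ
  -- Step 1 & 2 : enumerator polynomial per codeword
  have step12 : ∀ c : 𝒞, (∏ ab : ZMod p × ZMod p,
      psi p τ ab.1 ab.2 ^ wtab p n (c : Fin n → ZMod p × ZMod p) ab)
      = ∑' K : Fin n → ℤ × ℤ, F (c, K) := by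
    intro c
    have h1 : (∏ ab : ZMod p × ZMod p,
        psi p τ ab.1 ab.2 ^ wtab p n (c : Fin n → ZMod p × ZMod p) ab)
        = ∏ i, psi p τ (c.val i).1 (c.val i).2 := by
      rw [← Finset.prod_fiberwise' Finset.univ c.val (fun ab => psi p τ ab.1 ab.2)]
      refine Finset.prod_congr rfl fun ab _ => ?_
      rw [Finset.prod_const, wtab]
    have h2 := (prod_tsum_aux n (fun i => fterm p τ (c.val i)) (fun i => sumf _)).2
    rw [h1, ← h2]
    rfl
  have hslice : ∀ c : 𝒞, Summable fun K : Fin n → ℤ × ℤ => ‖F (c, K)‖ :=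
    fun c => (prod_tsum_aux n (fun i => fterm p τ (c.val i)) (fun i => sumf _)).1
  have hFsum : Summable F := by
    apply Summable.of_norm
    refine (summable_prod_of_nonneg (fun x => norm_nonneg _)).2 ⟨fun c => hslice c, ?_⟩
    exact Summable.of_finite
  -- the key pointwise identity
  have hsqrt : ((Real.sqrt (2 * (p:ℝ)) : ℝ) : ℂ) ^ 2 = 2 * (p : ℂ) := by
    rw [← Complex.ofReal_pow, Real.sq_sqrt (by positivity)]
    push_cast
    ring
  have key : ∀ cK : 𝒞 × (Fin n → ℤ × ℤ), G (fwd p n 𝒞 cK) = F cK := by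
    rintro ⟨c, K⟩
    rw [hG, hF]
    simp only [fwd, fterm]
    rw [Finset.prod_mul_distrib, ← Complex.exp_sum, ← Complex.exp_sum]
    congr 1
    · congr 1
      rw [Finset.sum_div, Finset.mul_sum]
      refine Finset.sum_congr rfl fun i _ => ?_
      rw [Complex.ofReal_div, div_pow, hsqrt]
      push_cast
      field_simp
      ring
    · congr 1
      rw [Finset.sum_div, Finset.mul_sum]
      refine Finset.sum_congr rfl fun i _ => ?_
      rw [Complex.ofReal_div, div_pow, hsqrt]
      push_cast
      field_simp
      ring
  calc
    ∑ c : 𝒞, ∏ ab : ZMod p × ZMod p,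
        psi p τ ab.1 ab.2 ^ wtab p n (c : Fin n → ZMod p × ZMod p) ab
        = ∑ c : 𝒞, ∑' K : Fin n → ℤ × ℤ, F (c, K) :=
      Finset.sum_congr rfl fun c _ => step12 c
    _ = ∑' c : 𝒞, ∑' K : Fin n → ℤ × ℤ, F (c, K) := (tsum_fintype _).symm
    _ = ∑' cK : 𝒞 × (Fin n → ℤ × ℤ), F cK :=
      (Summable.tsum_prod' hFsum fun c => (hslice c).of_norm).symm
    _ = ∑' cK : 𝒞 × (Fin n → ℤ × ℤ), G (fwd p n 𝒞 cK) :=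
      tsum_congr fun cK => (key cK).symm
    _ = ∑' x : tildeLattice p n 𝒞, G x :=
      (Equiv.ofBijective _ (fwd_bijective p n hp0 𝒞)).tsum_eq G
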